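/- For the M/M/∞ queue with λ_x = λ (constant), ν_x = νx, intensity ξ = λ/ν = 1, and weight u_x = (x+1)^{-1/2}, the quantity σ_δ = inf_{x ∈ ℕ} { ν(x+1) + λ - νx·u_{x-1}/u_x - λ·u_{x+1}/u_x } satisfies σ_δ ≥ ν/2; i.e., for every x ∈ ℕ: ν(x+1) + ν - νx·√((x+1)/x) - ν·√((x+1)/(x+2)) ≥ ν/2 (with the x = 0 term read as ν + ν - 0 - ν√(1/2) ≥ ν/2, using u_{-1} = 1). -/

import Mathlib

theorem stmt19 (ν : ℝ) (hν : 0 < ν) :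
    ∀ x : ℕ,
      ν / 2 ≤ ν * ((x : ℝ) + 1) + ν - ν * (x : ℝ) * Real.sqrt (((x : ℝ) + 1) / x)
        - ν * Real.sqrt (((x : ℝ) + 1) / ((x : ℝ) + 2)) := by
  intro x
  set t : ℝ := (x : ℝ) with ht_def
  have ht : 0 ≤ t := Nat.cast_nonneg x
  have h1 : t * Real.sqrt ((t + 1) / t) ≤ t + 1 / 2 := by
    rcases eq_or_lt_of_le ht with h0 | h0
    · rw [← h0]; norm_num
    · have key : (t + 1) / t = (t * (t + 1)) / t ^ 2 := by field_simp
      calc t * Real.sqrt ((t + 1) / t)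
          = Real.sqrt (t * (t + 1)) := by
            rw [key, Real.sqrt_div (by positivity), Real.sqrt_sq ht]
            field_simp
        _ ≤ Real.sqrt ((t + 1 / 2) ^ 2) := Real.sqrt_le_sqrt (by nlinarith)
        _ = t + 1 / 2 := Real.sqrt_sq (by linarith)
  have h2 : Real.sqrt ((t + 1) / (t + 2)) ≤ 1 := by
    rw [Real.sqrt_le_one]
    rw [div_le_one (by linarith)]
    linarith
  nlinarith [h1, h2, hν.le]
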